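/- arXiv:1806.03597 — 7 statements merged into one kernel-verified Lean document; each statement's English description precedes it below -/
import Mathlib

section
/- Let {Λ_j}_{j∈J} be a g-frame for H with bounds A, B, with frame operator S f = Σ_j Λ_j* Λ_j f and canonical dual Λ̃_j = Λ_j S⁻¹. For I ⊆ J define S_I f = Σ_{j∈I} Λ_j* Λ̃_j f. Then S_I is a bounded operator with ‖S_I f‖² ≤ B A⁻¹ ‖f‖² for all f ∈ H. -/
open ContinuousLinearMap

open scoped InnerProductSpace

-- Cauchy–Schwarz for tsums of nonnegative reals
lemma tsum_mul_le_sqrt_mul_sqrt' {ι : Type*} (a b : ι → ℝ)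
    (ha0 : ∀ i, 0 ≤ a i) (hb0 : ∀ i, 0 ≤ b i)
    (ha : Summable fun i => a i ^ 2) (hb : Summable fun i => b i ^ 2) :
    ∑' i, a i * b i ≤ Real.sqrt (∑' i, a i ^ 2) * Real.sqrt (∑' i, b i ^ 2) := by
  have hab : Summable fun i => a i * b i := by
    refine Summable.of_nonneg_of_le (fun i => mul_nonneg (ha0 i) (hb0 i))
      (fun i => ?_) (((ha.add hb).div_const 2))
    have := two_mul_le_add_sq (a i) (b i)
    linarith
  refine Summable.tsum_le_of_sum_le hab (fun s => ?_)
  have h1 : (∑ i ∈ s, a i * b i) ^ 2 ≤ (∑ i ∈ s, a i ^ 2) * ∑ i ∈ s, b i ^ 2 :=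
    Finset.sum_mul_sq_le_sq_mul_sq s a b
  have h2 : (∑ i ∈ s, a i ^ 2) ≤ ∑' i, a i ^ 2 := Summable.sum_le_tsum s (fun i _ => sq_nonneg _) ha
  have h3 : (∑ i ∈ s, b i ^ 2) ≤ ∑' i, b i ^ 2 := Summable.sum_le_tsum s (fun i _ => sq_nonneg _) hb
  have hs0 : 0 ≤ ∑ i ∈ s, a i * b i :=
    Finset.sum_nonneg fun i _ => mul_nonneg (ha0 i) (hb0 i)
  have h4 : (∑ i ∈ s, a i * b i) ^ 2 ≤ (∑' i, a i ^ 2) * ∑' i, b i ^ 2 := by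
    calc _ ≤ (∑ i ∈ s, a i ^ 2) * ∑ i ∈ s, b i ^ 2 := h1
    _ ≤ _ := by
      apply mul_le_mul h2 h3 (Finset.sum_nonneg fun i _ => sq_nonneg _)
      exact le_trans (Finset.sum_nonneg fun i _ => sq_nonneg _) h2
  calc (∑ i ∈ s, a i * b i) = Real.sqrt ((∑ i ∈ s, a i * b i) ^ 2) := by
        rw [Real.sqrt_sq hs0]
    _ ≤ Real.sqrt ((∑' i, a i ^ 2) * ∑' i, b i ^ 2) := Real.sqrt_le_sqrt h4
    _ = _ := Real.sqrt_mul (tsum_nonneg fun i => sq_nonneg _) _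

theorem stmt4 {H : Type*} [NormedAddCommGroup H] [InnerProductSpace ℂ H] [CompleteSpace H]
    {ι : Type*} {Hs : ι → Type*} [∀ j, NormedAddCommGroup (Hs j)]
    [∀ j, InnerProductSpace ℂ (Hs j)] [∀ j, CompleteSpace (Hs j)]
    (Λ : ∀ j, H →L[ℂ] Hs j) (A B : ℝ) (hA : 0 < A) (hAB : A ≤ B)
    (hsum : ∀ f : H, Summable fun j => ‖Λ j f‖ ^ 2)
    (hlow : ∀ f : H, A * ‖f‖ ^ 2 ≤ ∑' j, ‖Λ j f‖ ^ 2)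
    (hup : ∀ f : H, ∑' j, ‖Λ j f‖ ^ 2 ≤ B * ‖f‖ ^ 2)
    (S Sinv : H →L[ℂ] H)
    (hS : ∀ f : H, HasSum (fun j => adjoint (Λ j) (Λ j f)) (S f))
    (hinv₁ : Sinv ∘L S = 1) (hinv₂ : S ∘L Sinv = 1)
    (I : Set ι) (SI : H →L[ℂ] H)
    (hSI : ∀ f : H, HasSum (fun j : I => adjoint (Λ j) (Λ j (Sinv f))) (SI f)) :
    ∀ f : H, ‖SI f‖ ^ 2 ≤ B * A⁻¹ * ‖f‖ ^ 2 := by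
  intro f
  set g := Sinv f with hg
  have hSg : S g = f := by
    have := congrArg (fun T : H →L[ℂ] H => T f) hinv₂
    simpa using this
  -- ∑' j, ‖Λ j g‖^2 = re ⟪g, f⟫
  have h1 : HasSum (fun j => ⟪g, adjoint (Λ j) (Λ j g)⟫_ℂ) ⟪g, S g⟫_ℂ :=
    (innerSL ℂ g).hasSum (hS g)
  have h2 : HasSum (fun j => ((‖Λ j g‖ : ℂ)) ^ 2) ⟪g, f⟫_ℂ := by
    rw [← hSg]
    convert h1 using 2 with j
    rw [adjoint_inner_right, inner_self_eq_norm_sq_to_K]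
    norm_cast
  have h3 : HasSum (fun j => ‖Λ j g‖ ^ 2) (⟪g, f⟫_ℂ).re := by
    have := Complex.reCLM.hasSum h2
    simpa [← Complex.ofReal_pow] using this
  have hT : ∑' j, ‖Λ j g‖ ^ 2 = (⟪g, f⟫_ℂ).re := h3.tsum_eq
  set T := ∑' j, ‖Λ j g‖ ^ 2 with hTdef
  have hTle : T ≤ ‖g‖ * ‖f‖ := by
    rw [hT]
    calc (⟪g, f⟫_ℂ).re ≤ ‖⟪g, f⟫_ℂ‖ := Complex.re_le_norm _
      _ ≤ ‖g‖ * ‖f‖ := norm_inner_le_norm g f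
  have hTA : A * T ≤ ‖f‖ ^ 2 := by
    have hl := hlow g
    nlinarith [sq_nonneg (A * ‖g‖ - ‖f‖), norm_nonneg g, norm_nonneg f]
  have hTinv : T ≤ A⁻¹ * ‖f‖ ^ 2 := by
    rw [le_inv_mul_iff₀ hA]
    exact hTA
  -- restrict to I
  have hsubg : Summable fun j : I => ‖Λ (j : ι) g‖ ^ 2 := (hsum g).subtype I
  have hTI : (∑' j : I, ‖Λ (j : ι) g‖ ^ 2) ≤ T :=
    Summable.tsum_subtype_le (fun j => ‖Λ j g‖ ^ 2) I (fun j => sq_nonneg _) (hsum g)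
  set h := SI f with hh
  have hsubh : Summable fun j : I => ‖Λ (j : ι) h‖ ^ 2 := (hsum h).subtype I
  have hTIh : (∑' j : I, ‖Λ (j : ι) h‖ ^ 2) ≤ B * ‖h‖ ^ 2 :=
    le_trans (Summable.tsum_subtype_le (fun j => ‖Λ j h‖ ^ 2) I (fun j => sq_nonneg _) (hsum h)) (hup h)
  -- inner product expansion of ⟪h, SI f⟫
  have h4 : HasSum (fun j : I => ⟪Λ (j : ι) h, Λ (j : ι) g⟫_ℂ) ⟪h, SI f⟫_ℂ := by
    have := (innerSL ℂ h).hasSum (hSI f)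
    convert this using 2 with j
    · rfl
    · exact (adjoint_inner_right _ _ _).symm
    · rfl
  have habs : Summable fun j : I => ‖Λ (j : ι) h‖ * ‖Λ (j : ι) g‖ := by
    refine Summable.of_nonneg_of_le (fun j => mul_nonneg (norm_nonneg _) (norm_nonneg _))
      (fun j => ?_) ((hsubh.add hsubg).div_const 2)
    have := two_mul_le_add_sq (‖Λ (j : ι) h‖) (‖Λ (j : ι) g‖)
    linarith
  have hnorm : ‖⟪h, SI f⟫_ℂ‖ ≤ ∑' j : I, ‖Λ (j : ι) h‖ * ‖Λ (j : ι) g‖ := by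
    have hsn : Summable fun j : I => ‖⟪Λ (j : ι) h, Λ (j : ι) g⟫_ℂ‖ :=
      Summable.of_nonneg_of_le (fun j => norm_nonneg _)
        (fun j => norm_inner_le_norm _ _) habs
    calc ‖⟪h, SI f⟫_ℂ‖ = ‖∑' j : I, ⟪Λ (j : ι) h, Λ (j : ι) g⟫_ℂ‖ := by rw [h4.tsum_eq]
      _ ≤ ∑' j : I, ‖⟪Λ (j : ι) h, Λ (j : ι) g⟫_ℂ‖ := norm_tsum_le_tsum_norm hsn
      _ ≤ _ := Summable.tsum_le_tsum (fun j => norm_inner_le_norm _ _) hsn habs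
  have hinner_self : ‖⟪h, SI f⟫_ℂ‖ = ‖h‖ ^ 2 := by
    rw [← hh, inner_self_eq_norm_sq_to_K, norm_pow, RCLike.norm_ofReal, sq_abs]
  have hcs : (∑' j : I, ‖Λ (j : ι) h‖ * ‖Λ (j : ι) g‖) ≤
      Real.sqrt (B * ‖h‖ ^ 2) * Real.sqrt (A⁻¹ * ‖f‖ ^ 2) := by
    calc _ ≤ Real.sqrt (∑' j : I, ‖Λ (j : ι) h‖ ^ 2) *
        Real.sqrt (∑' j : I, ‖Λ (j : ι) g‖ ^ 2) :=
        tsum_mul_le_sqrt_mul_sqrt' _ _ (fun j => norm_nonneg _) (fun j => norm_nonneg _)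
          hsubh hsubg
      _ ≤ _ := by
        apply mul_le_mul (Real.sqrt_le_sqrt hTIh)
          (Real.sqrt_le_sqrt (le_trans hTI hTinv)) (Real.sqrt_nonneg _) (Real.sqrt_nonneg _)
  have key : ‖h‖ ^ 2 ≤ Real.sqrt (B * ‖h‖ ^ 2) * Real.sqrt (A⁻¹ * ‖f‖ ^ 2) := by
    have k := le_trans hnorm hcs
    rwa [hinner_self] at k
  -- finish
  have hB0 : (0:ℝ) ≤ B := le_trans hA.le hAB
  rcases eq_or_lt_of_le (norm_nonneg h) with h0 | h0
  · rw [← h0]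
    simpa using mul_nonneg (mul_nonneg hB0 (inv_nonneg.2 hA.le)) (sq_nonneg ‖f‖)
  · -- ‖h‖^2 ≤ sqrt(B*A⁻¹) ‖h‖ ‖f‖ so ‖h‖ ≤ sqrt(B*A⁻¹)‖f‖
    have hs1 : Real.sqrt (B * ‖h‖ ^ 2) = Real.sqrt B * ‖h‖ := by
      rw [Real.sqrt_mul hB0, Real.sqrt_sq (norm_nonneg h)]
    have hs2 : Real.sqrt (A⁻¹ * ‖f‖ ^ 2) = Real.sqrt A⁻¹ * ‖f‖ := by
      rw [Real.sqrt_mul (by positivity), Real.sqrt_sq (norm_nonneg f)]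
    rw [hs1, hs2] at key
    have hle : ‖h‖ ≤ Real.sqrt B * Real.sqrt A⁻¹ * ‖f‖ := by
      have := key
      nlinarith [norm_nonneg h]
    have : ‖h‖ ^ 2 ≤ (Real.sqrt B * Real.sqrt A⁻¹ * ‖f‖) ^ 2 := by
      apply pow_le_pow_left₀ (norm_nonneg h) hle
    calc ‖h‖ ^ 2 ≤ (Real.sqrt B * Real.sqrt A⁻¹ * ‖f‖) ^ 2 := this
      _ = (Real.sqrt B)^2 * (Real.sqrt A⁻¹)^2 * ‖f‖^2 := by ring
      _ = B * A⁻¹ * ‖f‖ ^ 2 := by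
        rw [Real.sq_sqrt hB0, Real.sq_sqrt (by positivity)]
end

section
/- Let {Λ_j}_{j∈J} be a g-frame for H with canonical dual {Λ̃_j}, and for I ⊆ J set S_I f = Σ_{j∈I} Λ_j* Λ̃_j f. Then for every f ∈ H: Σ_{j∈I} ⟨Λ̃_j f, Λ_j f⟩ − ‖S_I f‖² = Σ_{j∈Iᶜ} conj(⟨Λ̃_j f, Λ_j f⟩) − ‖S_{Iᶜ} f‖². -/
set_option maxHeartbeats 1000000


open ContinuousLinearMap

theorem stmt5 {H : Type*} [NormedAddCommGroup H] [InnerProductSpace ℂ H] [CompleteSpace H]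
    {ι : Type*} {Hs : ι → Type*} [∀ j, NormedAddCommGroup (Hs j)]
    [∀ j, InnerProductSpace ℂ (Hs j)] [∀ j, CompleteSpace (Hs j)]
    (Λ : ∀ j, H →L[ℂ] Hs j) (A B : ℝ) (hA : 0 < A) (hAB : A ≤ B)
    (hsum : ∀ f : H, Summable fun j => ‖Λ j f‖ ^ 2)
    (hlow : ∀ f : H, A * ‖f‖ ^ 2 ≤ ∑' j, ‖Λ j f‖ ^ 2)
    (hup : ∀ f : H, ∑' j, ‖Λ j f‖ ^ 2 ≤ B * ‖f‖ ^ 2)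
    (S Sinv : H →L[ℂ] H)
    (hS : ∀ f : H, HasSum (fun j => adjoint (Λ j) (Λ j f)) (S f))
    (hinv₁ : Sinv ∘L S = 1) (hinv₂ : S ∘L Sinv = 1)
    (I : Set ι) (SI SIc : H →L[ℂ] H)
    (hSI : ∀ f : H, HasSum (fun j : I => adjoint (Λ j) (Λ j (Sinv f))) (SI f))
    (hSIc : ∀ f : H, HasSum (fun j : ↥Iᶜ => adjoint (Λ j) (Λ j (Sinv f))) (SIc f)) :
    ∀ f : H,
      (∑' j : I, (inner ℂ (Λ j (Sinv f)) (Λ j f) : ℂ)) - (‖SI f‖ ^ 2 : ℂ) =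
        (∑' j : ↥Iᶜ, (starRingEnd ℂ) (inner ℂ (Λ j (Sinv f)) (Λ j f) : ℂ)) - (‖SIc f‖ ^ 2 : ℂ) := by
  intro f
  -- SI f + SIc f = f
  have hSf : S (Sinv f) = f := by
    have := ContinuousLinearMap.ext_iff.mp hinv₂ f
    simpa using this
  have hsplit : SI f + SIc f = f := by
    have hall : HasSum (fun j => adjoint (Λ j) (Λ j (Sinv f))) (SI f + SIc f) :=
      HasSum.add_compl (s := I) (f := fun j => adjoint (Λ j) (Λ j (Sinv f)))
        (a := SI f) (b := SIc f) (hSI f) (hSIc f)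
    have := hall.unique (hS (Sinv f))
    rw [this, hSf]
  have hIc : SIc f = f - SI f := eq_sub_of_add_eq (by rw [add_comm]; exact hsplit)
  -- sum over I
  have h1 : HasSum (fun j : I => (inner ℂ f (adjoint (Λ ↑j) (Λ ↑j (Sinv f))) : ℂ))
      (inner ℂ f (SI f)) := (innerSL ℂ f).hasSum (hSI f)
  have h2 : HasSum (fun j : I => (inner ℂ (Λ ↑j (Sinv f)) (Λ ↑j f) : ℂ))
      (inner ℂ (SI f) f) := by
    have := h1.star
    simp only [RCLike.star_def, inner_conj_symm] at this
    convert this using 2 with j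
    rw [adjoint_inner_left]
  have hIsum : (∑' j : I, (inner ℂ (Λ ↑j (Sinv f)) (Λ ↑j f) : ℂ)) = inner ℂ (SI f) f :=
    h2.tsum_eq
  -- sum over Iᶜ
  have h3 : HasSum (fun j : ↥Iᶜ => (inner ℂ f (adjoint (Λ ↑j) (Λ ↑j (Sinv f))) : ℂ))
      (inner ℂ f (SIc f)) := (innerSL ℂ f).hasSum (hSIc f)
  have h4 : HasSum (fun j : ↥Iᶜ => (starRingEnd ℂ) (inner ℂ (Λ ↑j (Sinv f)) (Λ ↑j f) : ℂ))
      (inner ℂ f (SIc f)) := by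
    convert h3 using 2 with j
    rw [adjoint_inner_right, inner_conj_symm]
  have hIcsum : (∑' j : ↥Iᶜ, (starRingEnd ℂ) (inner ℂ (Λ ↑j (Sinv f)) (Λ ↑j f) : ℂ))
      = inner ℂ f (SIc f) := h4.tsum_eq
  rw [hIsum, hIcsum, hIc]
  have e1 : ((‖SI f‖ : ℂ)) ^ 2 = inner ℂ (SI f) (SI f) := (inner_self_eq_norm_sq_to_K (SI f)).symm
  have e2 : ((‖f - SI f‖ : ℂ)) ^ 2 = inner ℂ (f - SI f) (f - SI f) :=
    (inner_self_eq_norm_sq_to_K (f - SI f)).symm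
  have e3 : ((‖f‖ : ℂ)) ^ 2 = inner ℂ f f := (inner_self_eq_norm_sq_to_K f).symm
  push_cast
  rw [e1, e2]
  simp only [inner_sub_left, inner_sub_right]
  ring
end

section
/- Let {Λ_j}_{j∈J} be a Parseval g-frame for H (i.e., Σ_j ‖Λ_j f‖² = ‖f‖² for all f). For I ⊆ J set S_I f = Σ_{j∈I} Λ_j* Λ_j f. Then for all f ∈ H: Σ_{j∈I} ‖Λ_j f‖² − ‖S_I f‖² = Σ_{j∈Iᶜ} ‖Λ_j f‖² − ‖S_{Iᶜ} f‖². -/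
set_option maxHeartbeats 1000000


open ContinuousLinearMap

local notation "⟪" x ", " y "⟫" => inner (𝕜 := ℂ) x y

theorem stmt6 {H : Type*} [NormedAddCommGroup H] [InnerProductSpace ℂ H] [CompleteSpace H]
    {ι : Type*} {Hs : ι → Type*} [∀ j, NormedAddCommGroup (Hs j)]
    [∀ j, InnerProductSpace ℂ (Hs j)] [∀ j, CompleteSpace (Hs j)]
    (Λ : ∀ j, H →L[ℂ] Hs j)
    (hP : ∀ f : H, HasSum (fun j => ‖Λ j f‖ ^ 2) (‖f‖ ^ 2))
    (I : Set ι) (SI SIc : H →L[ℂ] H)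
    (hSI : ∀ f : H, HasSum (fun j : I => adjoint (Λ j) (Λ j f)) (SI f))
    (hSIc : ∀ f : H, HasSum (fun j : ↥Iᶜ => adjoint (Λ j) (Λ j f)) (SIc f)) :
    ∀ f : H,
      (∑' j : I, ‖Λ j f‖ ^ 2) - ‖SI f‖ ^ 2 = (∑' j : ↥Iᶜ, ‖Λ j f‖ ^ 2) - ‖SIc f‖ ^ 2 := by
  -- inner sums
  have hinner : ∀ (f : H) (j : ι), ⟪f, adjoint (Λ j) (Λ j f)⟫ = (‖Λ j f‖ ^ 2 : ℂ) := by
    intro f j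
    rw [ContinuousLinearMap.adjoint_inner_right, inner_self_eq_norm_sq_to_K]
    norm_cast
  have hI : ∀ f : H, HasSum (fun j : I => ⟪f, adjoint (Λ (j : ι)) (Λ (j : ι) f)⟫) ⟪f, SI f⟫ :=
    fun f => (hSI f).map (AddMonoidHomClass.toAddMonoidHom (innerSL ℂ f)) (innerSL ℂ f).continuous
  have hIc : ∀ f : H, HasSum (fun j : ↥Iᶜ => ⟪f, adjoint (Λ (j : ι)) (Λ (j : ι) f)⟫) ⟪f, SIc f⟫ :=
    fun f => (hSIc f).map (AddMonoidHomClass.toAddMonoidHom (innerSL ℂ f)) (innerSL ℂ f).continuous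
  -- SI f + SIc f = f
  have hsum : ∀ f : H, SI f + SIc f = f := by
    have key : ∀ f : H, ⟪f, SI f + SIc f⟫ = ⟪f, f⟫ := by
      intro f
      have h1 : HasSum (fun j : ι => ⟪f, adjoint (Λ j) (Λ j f)⟫) (⟪f, SI f⟫ + ⟪f, SIc f⟫) :=
        HasSum.add_compl (f := fun j : ι => ⟪f, adjoint (Λ j) (Λ j f)⟫) (hI f) (hIc f)
      have h2 : HasSum (fun j : ι => ⟪f, adjoint (Λ j) (Λ j f)⟫) ((‖f‖ ^ 2 : ℂ)) := by
        have := (hP f).map (AddMonoidHomClass.toAddMonoidHom Complex.ofRealCLM) Complex.ofRealCLM.continuous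
        simpa [Function.comp_def, hinner f] using this
      rw [inner_add_right, h1.unique h2, inner_self_eq_norm_sq_to_K]
      norm_cast
    have hz : ∀ f : H, ⟪((SI + SIc) - ContinuousLinearMap.id ℂ H : H →L[ℂ] H) f, f⟫ = 0 := by
      intro f
      have := key f
      have : ⟪f, ((SI + SIc) - ContinuousLinearMap.id ℂ H : H →L[ℂ] H) f⟫ = 0 := by
        simp [inner_sub_right, inner_add_right, this]
      calc ⟪((SI + SIc) - ContinuousLinearMap.id ℂ H : H →L[ℂ] H) f, f⟫
          = starRingEnd ℂ ⟪f, ((SI + SIc) - ContinuousLinearMap.id ℂ H : H →L[ℂ] H) f⟫ :=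
            (inner_conj_symm _ _).symm
        _ = 0 := by rw [this]; simp
    have := (inner_map_self_eq_zero
      (((SI + SIc) - ContinuousLinearMap.id ℂ H : H →L[ℂ] H) : H →ₗ[ℂ] H)).mp (fun x => hz x)
    intro f
    have hf := LinearMap.congr_fun this f
    simpa [sub_eq_zero] using hf
  -- tsums as real parts
  intro f
  have htI : (∑' j : I, ‖Λ (j : ι) f‖ ^ 2) = Complex.re ⟪f, SI f⟫ := by
    have := ((hI f).map (AddMonoidHomClass.toAddMonoidHom Complex.reCLM) Complex.reCLM.continuous)
    simp only [hinner f, Complex.reCLM_apply, Complex.ofReal_re] at this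
    simpa [← Complex.ofReal_pow] using this.tsum_eq
  have htIc : (∑' j : ↥Iᶜ, ‖Λ (j : ι) f‖ ^ 2) = Complex.re ⟪f, SIc f⟫ := by
    have := ((hIc f).map (AddMonoidHomClass.toAddMonoidHom Complex.reCLM) Complex.reCLM.continuous)
    simp only [hinner f, Complex.reCLM_apply, Complex.ofReal_re] at this
    simpa [← Complex.ofReal_pow] using this.tsum_eq
  rw [htI, htIc]
  have hfc : SIc f = f - SI f := eq_sub_of_add_eq (by rw [add_comm]; exact hsum f)
  rw [hfc]
  have h1 : ⟪f, f - SI f⟫ = ⟪f, f⟫ - ⟪f, SI f⟫ := inner_sub_right _ _ _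
  have h2 : ‖f - SI f‖ ^ 2 = ‖f‖ ^ 2 - 2 * Complex.re ⟪f, SI f⟫ + ‖SI f‖ ^ 2 :=
    @norm_sub_sq ℂ _ _ _ _ f (SI f)
  have h3 : (inner ℂ f f : ℂ).re = ‖f‖ ^ 2 := by
    simpa using inner_self_eq_norm_sq (𝕜 := ℂ) (x := f)
  rw [h1, h2, Complex.sub_re, h3]
  ring
end

section
/- Let Λ = (W_j, Λ_j, v_j) be a g-fusion frame for H with canonical dual Λ̃, and for I ⊆ J let S_I f = Σ_{j∈I} v_j² π_{W_j} Λ_j* Λ̃_j π_{W̃_j} f. Then for all f ∈ H: Σ_{j∈I} v_j² ⟨Λ̃_j π_{W̃_j} f, Λ_j π_{W_j} f⟩ − ‖S_I f‖² = Σ_{j∈Iᶜ} v_j² conj(⟨Λ̃_j π_{W̃_j} f, Λ_j π_{W_j} f⟩) − ‖S_{Iᶜ} f‖². -/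
open ContinuousLinearMap

/-- Orthogonal projection onto a complete subspace, as an operator on the whole space. -/
noncomputable def pProj {H : Type*} [NormedAddCommGroup H] [InnerProductSpace ℂ H]
    (V : Submodule ℂ H) [CompleteSpace V] : H →L[ℂ] H :=
  V.subtypeL ∘L V.orthogonalProjection

theorem stmt7 {H : Type*} [NormedAddCommGroup H] [InnerProductSpace ℂ H] [CompleteSpace H]
    {ι : Type*} {Hs : ι → Type*} [∀ j, NormedAddCommGroup (Hs j)]
    [∀ j, InnerProductSpace ℂ (Hs j)] [∀ j, CompleteSpace (Hs j)]
    (W : ι → Submodule ℂ H) [∀ j, CompleteSpace (W j)]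
    (v : ι → ℝ) (hv : ∀ j, 0 < v j)
    (Λ : ∀ j, H →L[ℂ] Hs j) (A B : ℝ) (hA : 0 < A) (hAB : A ≤ B)
    (hsum : ∀ f : H, Summable fun j => (v j) ^ 2 * ‖Λ j (pProj (W j) f)‖ ^ 2)
    (hlow : ∀ f : H, A * ‖f‖ ^ 2 ≤ ∑' j, (v j) ^ 2 * ‖Λ j (pProj (W j) f)‖ ^ 2)
    (hup : ∀ f : H, ∑' j, (v j) ^ 2 * ‖Λ j (pProj (W j) f)‖ ^ 2 ≤ B * ‖f‖ ^ 2)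
    (SΛ Sinv : H →L[ℂ] H)
    (hSΛ : ∀ f : H,
      HasSum (fun j => ((v j : ℂ) ^ 2) • pProj (W j) (adjoint (Λ j) (Λ j (pProj (W j) f)))) (SΛ f))
    (hinv₁ : Sinv ∘L SΛ = 1) (hinv₂ : SΛ ∘L Sinv = 1)
    (Wd : ι → Submodule ℂ H) [∀ j, CompleteSpace (Wd j)]
    (hWd : ∀ j, Wd j = Submodule.map (Sinv : H →ₗ[ℂ] H) (W j))
    (Λd : ∀ j, H →L[ℂ] Hs j) (hΛd : ∀ j, Λd j = (Λ j ∘L pProj (W j)) ∘L Sinv)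
    (I : Set ι) (SI SIc : H →L[ℂ] H)
    (hSI : ∀ f : H,
      HasSum (fun j : I => ((v j : ℂ) ^ 2) •
        pProj (W j) (adjoint (Λ j) (Λd j (pProj (Wd j) f)))) (SI f))
    (hSIc : ∀ f : H,
      HasSum (fun j : ↥Iᶜ => ((v j : ℂ) ^ 2) •
        pProj (W j) (adjoint (Λ j) (Λd j (pProj (Wd j) f)))) (SIc f)) :
    ∀ f : H,
      (∑' j : I, ((v j : ℂ) ^ 2) * (inner ℂ (Λd j (pProj (Wd j) f)) (Λ j (pProj (W j) f)) : ℂ)) -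
          (‖SI f‖ ^ 2 : ℂ) =
        (∑' j : ↥Iᶜ, ((v j : ℂ) ^ 2) *
            (starRingEnd ℂ) (inner ℂ (Λd j (pProj (Wd j) f)) (Λ j (pProj (W j) f)) : ℂ)) -
          (‖SIc f‖ ^ 2 : ℂ) := by
  classical
  -- pProj is self-adjoint
  have hp : ∀ (V : Submodule ℂ H) (_ : CompleteSpace V) (x y : H),
      (inner ℂ (pProj V x) y : ℂ) = inner ℂ x (pProj V y) := by
    intro V _ x y
    exact Submodule.inner_starProjection_left_eq_right V x y
  -- inner ℂ of terms of SΛ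
  have hterm : ∀ (j : ι) (x y : H),
      (inner ℂ x (((v j : ℂ) ^ 2) • pProj (W j) (adjoint (Λ j) (Λ j (pProj (W j) y)))) : ℂ)
        = (v j : ℂ) ^ 2 * inner ℂ (Λ j (pProj (W j) x)) (Λ j (pProj (W j) y)) := by
    intro j x y
    rw [inner_smul_right, ← hp _ inferInstance, adjoint_inner_right]
  -- SΛ is self-adjoint
  have hSA : ∀ x y : H, (inner ℂ (SΛ x) y : ℂ) = inner ℂ x (SΛ y) := by
    intro x y
    have h1 := (innerSL ℂ x).hasSum (hSΛ y)
    have h2 := ((innerSL ℂ y).hasSum (hSΛ x)).star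
    have h2' : HasSum (fun j =>
        (inner ℂ x (((v j : ℂ) ^ 2) • pProj (W j) (adjoint (Λ j) (Λ j (pProj (W j) y)))) : ℂ))
        (inner ℂ (SΛ x) y) := by
      have heq : ∀ j : ι,
          (inner ℂ x (((v j : ℂ) ^ 2) •
              pProj (W j) (adjoint (Λ j) (Λ j (pProj (W j) y)))) : ℂ)
          = star ((innerSL ℂ y) (((v j : ℂ) ^ 2) •
            pProj (W j) (adjoint (Λ j) (Λ j (pProj (W j) x))))) := by
        intro j
        rw [innerSL_apply_apply, hterm j y x, hterm j x y, star_mul']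
        congr 1
        · rw [star_pow, RCLike.star_def, Complex.conj_ofReal]
        · rw [RCLike.star_def, inner_conj_symm]
      have hstar : (star ((innerSL ℂ y) (SΛ x)) : ℂ) = inner ℂ (SΛ x) y := by
        rw [innerSL_apply_apply, RCLike.star_def, inner_conj_symm]
      rw [← hstar]
      exact HasSum.congr_fun h2 heq
    exact h2'.unique h1
  -- SΛ ∘ Sinv = id pointwise
  have hSS : ∀ x : H, SΛ (Sinv x) = x := by
    intro x
    have := ContinuousLinearMap.ext_iff.mp hinv₂ x
    simpa using this
  -- Sinv is self-adjoint
  have hinvA : ∀ x y : H, (inner ℂ (Sinv x) y : ℂ) = inner ℂ x (Sinv y) := by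
    intro x y
    calc (inner ℂ (Sinv x) y : ℂ) = inner ℂ (Sinv x) (SΛ (Sinv y)) := by rw [hSS]
      _ = inner ℂ (SΛ (Sinv x)) (Sinv y) := (hSA _ _).symm
      _ = inner ℂ x (Sinv y) := by rw [hSS]
  -- key: pProj (W j) ∘ Sinv ∘ pProj (Wd j) = pProj (W j) ∘ Sinv
  have hkey : ∀ (j : ι) (f : H),
      pProj (W j) (Sinv (pProj (Wd j) f)) = pProj (W j) (Sinv f) := by
    intro j f
    have hg : f - pProj (Wd j) f ∈ (Wd j)ᗮ := by
      have := Submodule.sub_starProjection_mem_orthogonal (K := Wd j) f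
      exact this
    have hperp : Sinv (f - pProj (Wd j) f) ∈ (W j)ᗮ := by
      rw [Submodule.mem_orthogonal]
      intro w hw
      have hWdmem : Sinv w ∈ Wd j := by
        rw [hWd j]
        exact ⟨w, hw, rfl⟩
      have : (inner ℂ (Sinv w) (f - pProj (Wd j) f) : ℂ) = 0 :=
        (Submodule.mem_orthogonal (Wd j) _).mp hg (Sinv w) hWdmem
      calc (inner ℂ w (Sinv (f - pProj (Wd j) f)) : ℂ)
          = inner ℂ (Sinv w) (f - pProj (Wd j) f) := (hinvA w _).symm
        _ = 0 := this
    have hzero : pProj (W j) (Sinv (f - pProj (Wd j) f)) = 0 := by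
      have h0 := Submodule.orthogonalProjectionOnto_apply_of_mem_orthogonal hperp
      show (W j).subtypeL ((W j).orthogonalProjectionOnto (Sinv (f - pProj (Wd j) f))) = 0
      rw [h0]
      exact map_zero _
    have hsub : Sinv (f - pProj (Wd j) f) = Sinv f - Sinv (pProj (Wd j) f) := map_sub _ _ _
    rw [hsub, map_sub] at hzero
    exact (sub_eq_zero.mp hzero).symm
  -- SI f + SIc f = f
  have hC : ∀ f : H, SI f + SIc f = f := by
    intro f
    set F : ι → H := fun j => ((v j : ℂ) ^ 2) •
      pProj (W j) (adjoint (Λ j) (Λd j (pProj (Wd j) f))) with hF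
    have h1 : HasSum F (SI f + SIc f) := HasSum.add_compl (hSI f) (hSIc f)
    have hFeq : ∀ j : ι, F j = ((v j : ℂ) ^ 2) •
        pProj (W j) (adjoint (Λ j) (Λ j (pProj (W j) (Sinv f)))) := by
      intro j
      simp only [hF, hΛd j, ContinuousLinearMap.comp_apply]
      rw [hkey j f]
    have h3 : HasSum F (SΛ (Sinv f)) := by
      refine HasSum.congr_fun (hSΛ (Sinv f)) ?_
      intro j
      exact hFeq j
    rw [h1.unique h3, hSS]
  intro f
  set c : ι → ℂ := fun j => inner ℂ (Λd j (pProj (Wd j) f)) (Λ j (pProj (W j) f)) with hc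
  have hinner_term : ∀ j : ι,
      (inner ℂ f (((v j : ℂ) ^ 2) • pProj (W j) (adjoint (Λ j) (Λd j (pProj (Wd j) f)))) : ℂ)
        = (v j : ℂ) ^ 2 * (starRingEnd ℂ) (c j) := by
    intro j
    rw [inner_smul_right, ← hp _ inferInstance, adjoint_inner_right]
    rw [hc]
    rw [← inner_conj_symm]
  -- sum over I
  have hBsum : HasSum (fun j : ↥Iᶜ => (v j : ℂ) ^ 2 * (starRingEnd ℂ) (c j))
      (inner ℂ f (SIc f) : ℂ) := by
    have h1 := (innerSL ℂ f).hasSum (hSIc f)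
    refine HasSum.congr_fun h1 ?_
    intro j
    rw [innerSL_apply_apply]
    exact (hinner_term j).symm
  have hAsum : HasSum (fun j : I => (v j : ℂ) ^ 2 * (c j)) (inner ℂ (SI f) f : ℂ) := by
    have h1 := ((innerSL ℂ f).hasSum (hSI f)).star
    have hstar : (star ((innerSL ℂ f) (SI f)) : ℂ) = inner ℂ (SI f) f := by
      rw [innerSL_apply_apply, RCLike.star_def, inner_conj_symm]
    rw [← hstar]
    refine HasSum.congr_fun h1 ?_
    intro j
    rw [innerSL_apply_apply, hinner_term j, star_mul']
    congr 1
    · rw [star_pow, RCLike.star_def, Complex.conj_ofReal]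
    · rw [RCLike.star_def, Complex.conj_conj]
  rw [hAsum.tsum_eq, hBsum.tsum_eq]
  have hn1 : ((‖SI f‖ : ℂ)) ^ 2 = inner ℂ (SI f) (SI f) :=
    (inner_self_eq_norm_sq_to_K (SI f)).symm
  have hn2 : ((‖SIc f‖ : ℂ)) ^ 2 = inner ℂ (SIc f) (SIc f) :=
    (inner_self_eq_norm_sq_to_K (SIc f)).symm
  rw [hn1, hn2]
  have hCf : SIc f = f - SI f := eq_sub_of_add_eq' (hC f)
  rw [hCf]
  simp only [inner_sub_left, inner_sub_right]
  ring
end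

section
/- Let Λ = (W_j, Λ_j, v_j) be a Parseval g-fusion frame for H and S_I f = Σ_{j∈I} v_j² π_{W_j} Λ_j* Λ_j π_{W_j} f for I ⊆ J. Then for all f ∈ H: Σ_{j∈I} v_j² ‖Λ_j π_{W_j} f‖² + ‖S_{Iᶜ} f‖² ≥ (3/4)‖f‖². -/
open ContinuousLinearMap

set_option maxHeartbeats 1000000 in
theorem stmt8 {H : Type*} [NormedAddCommGroup H] [InnerProductSpace ℂ H] [CompleteSpace H]
    {ι : Type*} {Hs : ι → Type*} [∀ j, NormedAddCommGroup (Hs j)]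
    [∀ j, InnerProductSpace ℂ (Hs j)] [∀ j, CompleteSpace (Hs j)]
    (W : ι → Submodule ℂ H) [∀ j, CompleteSpace (W j)]
    (v : ι → ℝ) (hv : ∀ j, 0 < v j)
    (Λ : ∀ j, H →L[ℂ] Hs j)
    (hP : ∀ f : H, HasSum (fun j => (v j) ^ 2 * ‖Λ j (pProj (W j) f)‖ ^ 2) (‖f‖ ^ 2))
    (I : Set ι) (SIc : H →L[ℂ] H)
    (hSIc : ∀ f : H,
      HasSum (fun j : ↥Iᶜ => ((v j : ℂ) ^ 2) •
        pProj (W j) (adjoint (Λ j) (Λ j (pProj (W j) f)))) (SIc f)) :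
    ∀ f : H,
      3 / 4 * ‖f‖ ^ 2 ≤ (∑' j : I, (v j) ^ 2 * ‖Λ j (pProj (W j) f)‖ ^ 2) + ‖SIc f‖ ^ 2 := by
  intro f
  set b : ι → ℝ := fun j => (v j) ^ 2 * ‖Λ j (pProj (W j) f)‖ ^ 2 with hb
  have hbnn : ∀ j, 0 ≤ b j := fun j => by positivity
  have hsum := hP f
  have hsummable : Summable b := hsum.summable
  have hI : Summable (fun j : I => b j) := hsummable.subtype I
  have hIc : Summable (fun j : ↥Iᶜ => b j) := hsummable.subtype Iᶜ
  have hsplit : (∑' j : I, b j) + (∑' j : ↥Iᶜ, b j) = ‖f‖ ^ 2 :=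
    (hI.hasSum.add_compl hIc.hasSum).unique hsum
  set a := ∑' j : I, b j with ha
  set c := ∑' j : ↥Iᶜ, b j with hc
  have hann : 0 ≤ a := tsum_nonneg fun j => hbnn j
  have hcnn : 0 ≤ c := tsum_nonneg fun j => hbnn j
  -- compute re ⟪f, SIc f⟫ = c
  have key : ∀ j : ↥Iᶜ, (Complex.reCLM : ℂ →L[ℝ] ℝ)
      ((innerSL ℂ f) (((v (j : ι) : ℂ) ^ 2) •
        pProj (W j) (adjoint (Λ (j : ι)) (Λ (j : ι) (pProj (W j) f))))) = b j := by
    intro j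
    have h2 : (inner ℂ f (pProj (W (j : ι)) (adjoint (Λ (j : ι)) (Λ (j : ι) (pProj (W j) f)))) : ℂ)
        = ((‖Λ (j : ι) (pProj (W j) f)‖ ^ 2 : ℝ) : ℂ) := by
      show (inner ℂ f ((W (j:ι)).starProjection
        (adjoint (Λ (j : ι)) (Λ (j : ι) (pProj (W j) f)))) : ℂ) = _
      rw [← Submodule.inner_starProjection_left_eq_right,
        ContinuousLinearMap.adjoint_inner_right]
      have : ((W (j:ι)).starProjection f) = pProj (W (j:ι)) f := rfl
      rw [this, inner_self_eq_norm_sq_to_K]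
      norm_cast
    simp only [innerSL_apply_apply, inner_smul_right, h2]
    simp only [hb]
    norm_cast
  have hre : (Complex.reCLM : ℂ →L[ℝ] ℝ) ((innerSL ℂ f) (SIc f)) = c := by
    have h1 := ((Complex.reCLM : ℂ →L[ℝ] ℝ).hasSum ((innerSL ℂ f).hasSum (hSIc f)))
    simp only [key] at h1
    exact h1.tsum_eq ▸ rfl
  have hcs : c ≤ ‖f‖ * ‖SIc f‖ := by
    have := re_inner_le_norm (𝕜 := ℂ) f (SIc f)
    simpa [hre] using hre ▸ this
  have hc2 : c ^ 2 ≤ ‖f‖ ^ 2 * ‖SIc f‖ ^ 2 := by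
    nlinarith [mul_nonneg (norm_nonneg f) (norm_nonneg (SIc f))]
  nlinarith [sq_nonneg (a - c), sq_nonneg (‖SIc f‖), sq_nonneg (‖f‖), hsplit, hann, hcnn]
end

section
/- Let S be a positive invertible bounded operator on H and M, N positive bounded operators with M + N = S. Then for all f ∈ H: ⟨M f, f⟩ − ⟨S⁻¹ M f, M f⟩ = ⟨N f, f⟩ − ⟨S⁻¹ N f, N f⟩. -/
open ContinuousLinearMap

theorem stmt15 {H : Type*} [NormedAddCommGroup H] [InnerProductSpace ℂ H] [CompleteSpace H]
    (S Sinv M N : H →L[ℂ] H) (hS : S.IsPositive)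
    (hinv₁ : Sinv ∘L S = 1) (hinv₂ : S ∘L Sinv = 1)
    (hM : M.IsPositive) (hN : N.IsPositive) (hMN : M + N = S) :
    ∀ f : H,
      (inner ℂ (M f) f : ℂ) - (inner ℂ (Sinv (M f)) (M f) : ℂ) =
        (inner ℂ (N f) f : ℂ) - (inner ℂ (Sinv (N f)) (N f) : ℂ) := by
  intro f
  have hSsym : ∀ x y : H, (inner ℂ (S x) y : ℂ) = inner ℂ x (S y) := fun x y => by
    simpa using (isSelfAdjoint_iff_isSymmetric (A := S)).mp hS.isSelfAdjoint x y
  have hMsym : ∀ x y : H, (inner ℂ (M x) y : ℂ) = inner ℂ x (M y) := fun x y => by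
    simpa using (isSelfAdjoint_iff_isSymmetric (A := M)).mp hM.isSelfAdjoint x y
  have hNf : N f = S f - M f := by
    have : N = S - M := by rw [← hMN]; abel
    rw [this]; simp
  have hSinvS : ∀ x : H, Sinv (S x) = x := by
    intro x
    have := congrArg (fun T : H →L[ℂ] H => T x) hinv₁
    simpa using this
  have hSSinv : ∀ x : H, S (Sinv x) = x := by
    intro x
    have := congrArg (fun T : H →L[ℂ] H => T x) hinv₂
    simpa using this
  have key : (inner ℂ (Sinv (M f)) (S f) : ℂ) = inner ℂ (M f) f := by
    rw [← hSsym (Sinv (M f)) f, hSSinv]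
  rw [hNf]
  simp only [inner_sub_left, inner_sub_right, map_sub, hSinvS]
  rw [hSsym f f, ← hMsym f f]
  linear_combination -key
end

section
/- Let S be a positive invertible bounded operator on a Hilbert space H and M, N positive operators with M + N = S. Then (1/2) S ≤ M S⁻¹ M + N S⁻¹ N ≤ (3/2) S in the operator order. -/
open ContinuousLinearMap

open scoped NNReal in
lemma stmt16_aux {A : Type*} [CStarAlgebra A] [PartialOrder A] [StarOrderedRing A]
    (S Sinv M N : A) (hS0 : 0 ≤ S) (hM0 : 0 ≤ M) (hN0 : 0 ≤ N) (hMN : M + N = S)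
    (h1 : Sinv * S = 1) (h2 : S * Sinv = 1) :
    0 ≤ M * (Sinv * M) + N * (Sinv * N) - (1 / 2 : ℂ) • S ∧
      0 ≤ (3 / 2 : ℂ) • S - (M * (Sinv * M) + N * (Sinv * N)) := by
  have hS_sa : star S = S := (IsSelfAdjoint.of_nonneg hS0).star_eq
  -- Sinv is selfadjoint and nonneg
  have h3 : star Sinv * S = 1 := by
    have h := congrArg star h2
    rwa [star_mul, hS_sa, star_one] at h
  have hSinv_sa : star Sinv = Sinv := by
    calc star Sinv = star Sinv * (S * Sinv) := by rw [h2, mul_one]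
    _ = (star Sinv * S) * Sinv := by rw [mul_assoc]
    _ = Sinv := by rw [h3, one_mul]
  have hSinv0 : 0 ≤ Sinv := by
    have h := star_left_conjugate_nonneg hS0 Sinv
    rwa [hSinv_sa, mul_assoc, h2, mul_one] at h
  -- square root of Sinv
  set s := CFC.sqrt Sinv with hs_def
  have hs0 : 0 ≤ s := CFC.sqrt_nonneg Sinv
  have hs_sa : star s = s := (IsSelfAdjoint.of_nonneg hs0).star_eq
  have hss : s * s = Sinv := CFC.sqrt_mul_sqrt_self Sinv hSinv0
  have hcomm : s * Sinv = Sinv * s := by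
    have h := cfcₙ_commute_cfcₙ (⇑NNReal.sqrt) id Sinv
    rw [cfcₙ_id ℝ≥0 Sinv hSinv0] at h
    exact h.eq
  have hsS : S * s = s * S := by
    calc S * s = S * s * (Sinv * S) := by rw [h1, mul_one]
    _ = S * (s * Sinv) * S := by simp only [mul_assoc]
    _ = S * (Sinv * s) * S := by rw [hcomm]
    _ = (S * Sinv) * (s * S) := by simp only [mul_assoc]
    _ = s * S := by rw [h2, one_mul]
  -- normalization lemmas
  have c1 : ∀ x : A, s * (S * x) = S * (s * x) := by
    intro x; rw [← mul_assoc, ← hsS, mul_assoc]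
  have c2 : ∀ x : A, s * (s * x) = Sinv * x := by
    intro x; rw [← mul_assoc, hss]
  have c3 : ∀ x : A, S * (Sinv * x) = x := by
    intro x; rw [← mul_assoc, h2, one_mul]
  have c4 : ∀ x : A, Sinv * (S * x) = x := by
    intro x; rw [← mul_assoc, h1, one_mul]
  set t := S * s with ht_def
  set p := s * (M * s) with hp_def
  have hsS' : S * s = s * S := hsS
  have ht_sa : star t = t := by
    rw [ht_def, star_mul, hs_sa, hS_sa]
    exact hsS'.symm
  -- conjugation identities
  have J1 : t * (p * t) = M := by
    rw [ht_def, hp_def]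
    simp only [mul_assoc, c1, c2, c3, c4, hss, h1, h2, mul_one, one_mul]
  have J2 : t * (p * (p * t)) = M * (Sinv * M) := by
    rw [ht_def, hp_def]
    simp only [mul_assoc, c1, c2, c3, c4, hss, h1, h2, mul_one, one_mul]
  have J3 : t * t = S := by
    rw [ht_def]
    simp only [mul_assoc, c1, c2, c3, c4, hss, h1, h2, mul_one, one_mul]
  -- positivity facts about p
  have hp0 : 0 ≤ p := by
    have h := star_left_conjugate_nonneg hM0 s
    rwa [hs_sa, mul_assoc] at h
  have hp_sa : star p = p := (IsSelfAdjoint.of_nonneg hp0).star_eq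
  have hpN : p + s * (N * s) = 1 := by
    have : p + s * (N * s) = s * ((M + N) * s) := by
      rw [hp_def, add_mul, mul_add]
    rw [this, hMN]
    simp only [mul_assoc, c1, c2, c3, c4, hss, h1, h2, mul_one, one_mul]
  have hp1 : p ≤ 1 := by
    have hq0 : 0 ≤ s * (N * s) := by
      have h := star_left_conjugate_nonneg hN0 s
      rwa [hs_sa, mul_assoc] at h
    calc p ≤ p + s * (N * s) := le_add_of_nonneg_right hq0
    _ = 1 := hpN
  have hpp : p * p ≤ p := by
    have h := CStarAlgebra.pow_antitone hp0 hp1 (one_le_two : (1 : ℕ) ≤ 2)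
    simpa [pow_two] using h
  -- the key expansion of N * (Sinv * N)
  have hN' : N = S - M := eq_sub_of_add_eq' hMN
  have hNN : N * (Sinv * N) = S - M - M + M * (Sinv * M) := by
    rw [hN']
    simp only [mul_sub, sub_mul, c3, h1, mul_one]
    abel
  -- the scalar √(1/2)
  set u : ℝ := Real.sqrt (1 / 2) with hu_def
  have huu : (u : ℂ) * (u : ℂ) = (1 / 2 : ℂ) := by
    rw [← Complex.ofReal_mul, Real.mul_self_sqrt (by norm_num)]
    norm_num
  constructor
  · -- lower bound
    set w : A := (2 : ℂ) • p - 1 with hw_def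
    have hw_sa : star w = w := by
      rw [hw_def, star_sub, star_smul, star_one, hp_sa]
      norm_num
    set z : A := (u : ℂ) • (w * t) with hz_def
    have hz : star z * z = (1 / 2 : ℂ) • (t * (w * (w * t))) := by
      rw [hz_def, star_smul, star_mul, hw_sa, ht_sa, Complex.star_def,
        Complex.conj_ofReal, smul_mul_assoc, mul_smul_comm, smul_smul, huu]
      congr 1
      simp only [mul_assoc]
    have hexp : t * (w * (w * t)) =
        (4 : ℂ) • (t * (p * (p * t))) - (4 : ℂ) • (t * (p * t)) + t * t := by
      rw [hw_def]
      simp only [sub_mul, mul_sub, smul_mul_assoc, mul_smul_comm, one_mul, mul_one,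
        smul_smul, smul_sub, mul_assoc]
      module
    have key : M * (Sinv * M) + N * (Sinv * N) - (1 / 2 : ℂ) • S = star z * z := by
      rw [hz, hexp, J1, J2, J3, hNN]
      module
    rw [key]
    exact star_mul_self_nonneg z
  · -- upper bound
    set Z : A := (1 / 2 : ℂ) • 1 + (2 : ℂ) • (p - p * p) with hZ_def
    have hZ0 : 0 ≤ Z := by
      have hhalf : 0 ≤ (1 / 2 : ℂ) • (1 : A) := by
        have h := star_mul_self_nonneg ((u : ℂ) • (1 : A))
        rwa [star_smul, star_one, Complex.star_def, Complex.conj_ofReal,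
          smul_mul_assoc, mul_smul_comm, smul_smul, huu, one_mul] at h
      have hsq : 0 ≤ (2 : ℂ) • (p - p * p) := by
        have h : 0 ≤ p - p * p := sub_nonneg.mpr hpp
        rw [two_smul]
        exact add_nonneg h h
      exact add_nonneg hhalf hsq
    have key : (3 / 2 : ℂ) • S - (M * (Sinv * M) + N * (Sinv * N)) = star t * Z * t := by
      have hZt : star t * Z * t =
          (1 / 2 : ℂ) • (t * t) + (2 : ℂ) • (t * (p * t)) - (2 : ℂ) • (t * (p * (p * t))) := by
        rw [ht_sa, hZ_def]
        simp only [mul_add, add_mul, mul_sub, sub_mul, smul_mul_assoc, mul_smul_comm,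
          mul_one, one_mul, mul_assoc]
        module
      rw [hZt, J1, J2, J3, hNN]
      module
    rw [key]
    exact star_left_conjugate_nonneg hZ0 t

theorem stmt16 {H : Type*} [NormedAddCommGroup H] [InnerProductSpace ℂ H] [CompleteSpace H]
    (S Sinv M N : H →L[ℂ] H) (hS : S.IsPositive)
    (hinv₁ : Sinv ∘L S = 1) (hinv₂ : S ∘L Sinv = 1)
    (hM : M.IsPositive) (hN : N.IsPositive) (hMN : M + N = S) :
    ((M ∘L Sinv ∘L M + N ∘L Sinv ∘L N) - (1 / 2 : ℂ) • S).IsPositive ∧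
      ((3 / 2 : ℂ) • S - (M ∘L Sinv ∘L M + N ∘L Sinv ∘L N)).IsPositive := by
  have hS0 : (0 : H →L[ℂ] H) ≤ S := (nonneg_iff_isPositive S).mpr hS
  have hM0 : (0 : H →L[ℂ] H) ≤ M := (nonneg_iff_isPositive M).mpr hM
  have hN0 : (0 : H →L[ℂ] H) ≤ N := (nonneg_iff_isPositive N).mpr hN
  have h1 : Sinv * S = 1 := hinv₁
  have h2 : S * Sinv = 1 := hinv₂
  have hcomp : ∀ f g : H →L[ℂ] H, f ∘L g = f * g := fun _ _ => rfl
  obtain ⟨k1, k2⟩ := stmt16_aux S Sinv M N hS0 hM0 hN0 hMN h1 h2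
  constructor
  · rw [← nonneg_iff_isPositive]
    simp only [hcomp]
    simpa [mul_assoc] using k1
  · rw [← nonneg_iff_isPositive]
    simp only [hcomp]
    simpa [mul_assoc] using k2
end
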